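/- Let n ≥ 3 be an integer, C₁ ∈ ℝ, and C₂, C₃, C₄ > 0. Define, for ξ ∈ ℝ with ξ + C₁ ≠ 0, u(ξ) = C₂ |ξ + C₁| exp(−C₃(ξ + C₁)^{n−1}) and φ(ξ) = sign(ξ + C₁) · C₄ exp(C₃(ξ + C₁)^{n−1}). Then u > 0, φ is nowhere vanishing, and on every open interval not meeting {ξ : ξ + C₁ = 0}, φ and u satisfy the ODE system (E1) (n−2)φ''/φ − (m/u)(u'' + 2(φ'/φ)u') = 0 and (E2) φ''/φ − (n−1)(φ')²/φ² + m(φ'/φ)(u'/u) = 0, with m = 2 − n. -/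

import Mathlib

lemma aux_ode (j : ℕ) (C₁ C₃ c c₂ : ℝ) (hc : c ≠ 0) (hc2 : c₂ ≠ 0)
    (φ u : ℝ → ℝ) (ξ : ℝ) (ht : ξ + C₁ ≠ 0)
    (hφ : φ =ᶠ[nhds ξ] fun x => c * Real.exp (C₃ * (x + C₁) ^ (j + 2)))
    (hu : u =ᶠ[nhds ξ] fun x => c₂ * ((x + C₁) * Real.exp (-C₃ * (x + C₁) ^ (j + 2)))) :
    (((j : ℝ) + 1) * deriv (deriv φ) ξ / φ ξ
      - ((-((j : ℝ) + 1)) / u ξ) * (deriv (deriv u) ξ + 2 * (deriv φ ξ / φ ξ) * deriv u ξ) = 0) ∧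
    (deriv (deriv φ) ξ / φ ξ - ((j : ℝ) + 2) * (deriv φ ξ) ^ 2 / (φ ξ) ^ 2
      + (-((j : ℝ) + 1)) * (deriv φ ξ / φ ξ) * (deriv u ξ / u ξ) = 0) := by
  have hid : ∀ x : ℝ, HasDerivAt (fun y : ℝ => y + C₁) 1 x :=
    fun x => (hasDerivAt_id x).add_const C₁
  have hpow : ∀ (k : ℕ) (x : ℝ),
      HasDerivAt (fun y : ℝ => (y + C₁) ^ (k + 1)) (((k : ℝ) + 1) * (x + C₁) ^ k) x := by
    intro k x
    have h := (hid x).fun_pow (k + 1)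
    refine h.congr_deriv ?_
    push_cast
    ring
  have hE : ∀ x : ℝ, HasDerivAt (fun y : ℝ => Real.exp (C₃ * (y + C₁) ^ (j + 2)))
      (C₃ * ((j : ℝ) + 2) * (x + C₁) ^ (j + 1) * Real.exp (C₃ * (x + C₁) ^ (j + 2))) x := by
    intro x
    have h := ((hpow (j + 1) x).const_mul C₃).exp
    refine h.congr_deriv ?_
    push_cast
    ring
  have hEn : ∀ x : ℝ, HasDerivAt (fun y : ℝ => Real.exp (-C₃ * (y + C₁) ^ (j + 2)))
      (-(C₃ * ((j : ℝ) + 2) * (x + C₁) ^ (j + 1)) * Real.exp (-C₃ * (x + C₁) ^ (j + 2))) x := by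
    intro x
    have h := ((hpow (j + 1) x).const_mul (-C₃)).exp
    refine h.congr_deriv ?_
    push_cast
    ring
  -- φ first derivative
  have hφ1 : ∀ x : ℝ, HasDerivAt (fun y : ℝ => c * Real.exp (C₃ * (y + C₁) ^ (j + 2)))
      (c * (C₃ * ((j : ℝ) + 2)) * ((x + C₁) ^ (j + 1) * Real.exp (C₃ * (x + C₁) ^ (j + 2)))) x := by
    intro x
    have h := (hE x).const_mul c
    refine h.congr_deriv ?_
    ring
  have hdφ : deriv φ ξ
      = c * (C₃ * ((j : ℝ) + 2)) * ((ξ + C₁) ^ (j + 1) * Real.exp (C₃ * (ξ + C₁) ^ (j + 2))) := by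
    rw [hφ.deriv_eq]
    exact (hφ1 ξ).deriv
  have hdφfun : deriv φ =ᶠ[nhds ξ] fun x =>
      c * (C₃ * ((j : ℝ) + 2)) * ((x + C₁) ^ (j + 1) * Real.exp (C₃ * (x + C₁) ^ (j + 2))) :=
    hφ.deriv.trans (Filter.Eventually.of_forall fun x => (hφ1 x).deriv)
  have hφ2 : ∀ x : ℝ, HasDerivAt (fun y : ℝ =>
      c * (C₃ * ((j : ℝ) + 2)) * ((y + C₁) ^ (j + 1) * Real.exp (C₃ * (y + C₁) ^ (j + 2))))
      ((c * C₃ * ((j : ℝ) + 2) * ((j : ℝ) + 1) * (x + C₁) ^ j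
        + c * C₃ ^ 2 * ((j : ℝ) + 2) ^ 2 * (x + C₁) ^ (2 * j + 2))
        * Real.exp (C₃ * (x + C₁) ^ (j + 2))) x := by
    intro x
    have h := ((hpow j x).fun_mul (hE x)).const_mul (c * (C₃ * ((j : ℝ) + 2)))
    refine h.congr_deriv ?_
    ring
  have hd2φ : deriv (deriv φ) ξ
      = (c * C₃ * ((j : ℝ) + 2) * ((j : ℝ) + 1) * (ξ + C₁) ^ j
        + c * C₃ ^ 2 * ((j : ℝ) + 2) ^ 2 * (ξ + C₁) ^ (2 * j + 2))
        * Real.exp (C₃ * (ξ + C₁) ^ (j + 2)) := by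
    rw [hdφfun.deriv_eq]
    exact (hφ2 ξ).deriv
  -- u first derivative
  have hu1 : ∀ x : ℝ, HasDerivAt (fun y : ℝ =>
      c₂ * ((y + C₁) * Real.exp (-C₃ * (y + C₁) ^ (j + 2))))
      (c₂ * Real.exp (-C₃ * (x + C₁) ^ (j + 2))
        - c₂ * C₃ * ((j : ℝ) + 2) * ((x + C₁) ^ (j + 2) * Real.exp (-C₃ * (x + C₁) ^ (j + 2)))) x := by
    intro x
    have h := ((hid x).fun_mul (hEn x)).const_mul c₂
    refine h.congr_deriv ?_
    ring
  have hdu : deriv u ξ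
      = c₂ * Real.exp (-C₃ * (ξ + C₁) ^ (j + 2))
        - c₂ * C₃ * ((j : ℝ) + 2) * ((ξ + C₁) ^ (j + 2) * Real.exp (-C₃ * (ξ + C₁) ^ (j + 2))) := by
    rw [hu.deriv_eq]
    exact (hu1 ξ).deriv
  have hdufun : deriv u =ᶠ[nhds ξ] fun x =>
      c₂ * Real.exp (-C₃ * (x + C₁) ^ (j + 2))
        - c₂ * C₃ * ((j : ℝ) + 2) * ((x + C₁) ^ (j + 2) * Real.exp (-C₃ * (x + C₁) ^ (j + 2))) :=
    hu.deriv.trans (Filter.Eventually.of_forall fun x => (hu1 x).deriv)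
  have hu2 : ∀ x : ℝ, HasDerivAt (fun y : ℝ =>
      c₂ * Real.exp (-C₃ * (y + C₁) ^ (j + 2))
        - c₂ * C₃ * ((j : ℝ) + 2) * ((y + C₁) ^ (j + 2) * Real.exp (-C₃ * (y + C₁) ^ (j + 2))))
      ((-(c₂ * C₃ * ((j : ℝ) + 2)) * (x + C₁) ^ (j + 1)
        - c₂ * C₃ * ((j : ℝ) + 2) ^ 2 * (x + C₁) ^ (j + 1)
        + c₂ * C₃ ^ 2 * ((j : ℝ) + 2) ^ 2 * (x + C₁) ^ (2 * j + 3))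
        * Real.exp (-C₃ * (x + C₁) ^ (j + 2))) x := by
    intro x
    have h := ((hEn x).const_mul c₂).fun_sub
      (((hpow (j + 1) x).fun_mul (hEn x)).const_mul (c₂ * C₃ * ((j : ℝ) + 2)))
    refine h.congr_deriv ?_
    push_cast
    ring
  have hd2u : deriv (deriv u) ξ
      = (-(c₂ * C₃ * ((j : ℝ) + 2)) * (ξ + C₁) ^ (j + 1)
        - c₂ * C₃ * ((j : ℝ) + 2) ^ 2 * (ξ + C₁) ^ (j + 1)
        + c₂ * C₃ ^ 2 * ((j : ℝ) + 2) ^ 2 * (ξ + C₁) ^ (2 * j + 3))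
        * Real.exp (-C₃ * (ξ + C₁) ^ (j + 2)) := by
    rw [hdufun.deriv_eq]
    exact (hu2 ξ).deriv
  have hφξ : φ ξ = c * Real.exp (C₃ * (ξ + C₁) ^ (j + 2)) := hφ.eq_of_nhds
  have huξ : u ξ = c₂ * ((ξ + C₁) * Real.exp (-C₃ * (ξ + C₁) ^ (j + 2))) := hu.eq_of_nhds
  have hE0 : Real.exp (C₃ * (ξ + C₁) ^ (j + 2)) ≠ 0 := Real.exp_ne_zero _
  have hE0' : Real.exp (-C₃ * (ξ + C₁) ^ (j + 2)) ≠ 0 := Real.exp_ne_zero _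
  rw [hdφ, hd2φ, hdu, hd2u, hφξ, huξ]
  constructor
  · field_simp
    ring
  · field_simp
    ring

/-- the explicit functions `u, φ` of the classification do satisfy
the ODE system (E1)–(E2) with `m = 2 - n` on every open interval avoiding
`ξ + C₁ = 0`. -/
theorem stmt2 (n : ℕ) (hn : 3 ≤ n) (m : ℝ) (hm : m = 2 - (n : ℝ))
    (C₁ C₂ C₃ C₄ : ℝ) (h2 : 0 < C₂) (h3 : 0 < C₃) (h4 : 0 < C₄)
    (u φ : ℝ → ℝ)
    (hu : u = fun ξ => C₂ * |ξ + C₁| * Real.exp (-C₃ * (ξ + C₁) ^ (n - 1)))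
    (hφ : φ = fun ξ => Real.sign (ξ + C₁) * C₄ * Real.exp (C₃ * (ξ + C₁) ^ (n - 1))) :
    (∀ ξ : ℝ, ξ + C₁ ≠ 0 → 0 < u ξ ∧ φ ξ ≠ 0) ∧
    (∀ I : Set ℝ, IsOpen I → I.OrdConnected → (∀ ξ ∈ I, ξ + C₁ ≠ 0) →
      ∀ ξ ∈ I,
        (((n : ℝ) - 2) * deriv (deriv φ) ξ / φ ξ
          - (m / u ξ) * (deriv (deriv u) ξ + 2 * (deriv φ ξ / φ ξ) * deriv u ξ) = 0) ∧
        (deriv (deriv φ) ξ / φ ξ - ((n : ℝ) - 1) * (deriv φ ξ) ^ 2 / (φ ξ) ^ 2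
          + m * (deriv φ ξ / φ ξ) * (deriv u ξ / u ξ) = 0)) := by
  obtain ⟨j, rfl⟩ : ∃ j, n = j + 3 := ⟨n - 3, by omega⟩
  have hsub : j + 3 - 1 = j + 2 := by omega
  rw [hsub] at hu hφ
  have hmval : m = -((j : ℝ) + 1) := by rw [hm]; push_cast; ring
  constructor
  · intro ξ ht
    constructor
    · rw [hu]
      have : 0 < |ξ + C₁| := abs_pos.mpr ht
      positivity
    · rw [hφ]
      have hs : Real.sign (ξ + C₁) ≠ 0 := by
        rcases ht.lt_or_gt with h | h
        · rw [Real.sign_of_neg h]; norm_num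
        · rw [Real.sign_of_pos h]; norm_num
      exact mul_ne_zero (mul_ne_zero hs (ne_of_gt h4)) (Real.exp_ne_zero _)
  · intro I _ _ hI ξ hξ
    have ht : ξ + C₁ ≠ 0 := hI ξ hξ
    have key : ∃ c c₂ : ℝ, c ≠ 0 ∧ c₂ ≠ 0 ∧
        (φ =ᶠ[nhds ξ] fun x => c * Real.exp (C₃ * (x + C₁) ^ (j + 2))) ∧
        (u =ᶠ[nhds ξ] fun x => c₂ * ((x + C₁) * Real.exp (-C₃ * (x + C₁) ^ (j + 2)))) := by
      rcases ht.lt_or_gt with h | h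
      · refine ⟨-C₄, -C₂, neg_ne_zero.mpr h4.ne', neg_ne_zero.mpr h2.ne', ?_, ?_⟩
        · have hmem : Set.Iio (-C₁) ∈ nhds ξ := Iio_mem_nhds (by linarith)
          filter_upwards [hmem] with x hx
          have hx' : x + C₁ < 0 := by simpa [Set.mem_Iio] using by linarith [hx.out]
          rw [hφ]
          simp only [Real.sign_of_neg hx']
          ring
        · have hmem : Set.Iio (-C₁) ∈ nhds ξ := Iio_mem_nhds (by linarith)
          filter_upwards [hmem] with x hx
          have hx' : x + C₁ < 0 := by simpa [Set.mem_Iio] using by linarith [hx.out]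
          simp only [hu]; rw [abs_of_neg hx']
          ring
      · refine ⟨C₄, C₂, h4.ne', h2.ne', ?_, ?_⟩
        · have hmem : Set.Ioi (-C₁) ∈ nhds ξ := Ioi_mem_nhds (by linarith)
          filter_upwards [hmem] with x hx
          have hx' : 0 < x + C₁ := by simpa [Set.mem_Ioi] using by linarith [hx.out]
          rw [hφ]
          simp only [Real.sign_of_pos hx']
          ring
        · have hmem : Set.Ioi (-C₁) ∈ nhds ξ := Ioi_mem_nhds (by linarith)
          filter_upwards [hmem] with x hx
          have hx' : 0 < x + C₁ := by simpa [Set.mem_Ioi] using by linarith [hx.out]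
          simp only [hu]; rw [abs_of_pos hx']
          ring
    obtain ⟨c, c₂, hc, hc2, hφev, huev⟩ := key
    have H := aux_ode j C₁ C₃ c c₂ hc hc2 φ u ξ ht hφev huev
    have e1 : ((j : ℝ) + 3) - 2 = (j : ℝ) + 1 := by ring
    have e2 : ((j : ℝ) + 3) - 1 = (j : ℝ) + 2 := by ring
    constructor
    · rw [hmval]
      push_cast
      rw [e1]
      exact H.1
    · rw [hmval]
      push_cast
      rw [e2]
      exact H.2
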